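/- Let 1 ≤ k ≤ n−1 and let J be a frozen k-element subset of {1,…,n}, i.e. J = {i, i+1, …, i+k−1} (mod n) for some i. Then the restriction of ρ_J to the vertices of the hypersimplex Δ_{k,n} is affine: there exist w ∈ ℝ^n and c ∈ ℝ such that ρ_J(e_I) = ⟨w, e_I⟩ + c for every k-element subset I of {1,…,n}. -/

import Mathlib

open Finset

/-- Cyclic successor in `Fin n` (so the index after `n` is `1`). -/
def csucc {n : ℕ} (x : Fin n) : Fin n :=
  ⟨(x.val + 1) % n, Nat.mod_lt _ (Nat.lt_of_le_of_lt (Nat.zero_le _) x.isLt)⟩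

/-- The linear functional `L_j(x) = Σ_{r=1}^{n−1} r·x_{j+r}` (subscripts mod `n`). -/
def Lfun {n : ℕ} (j : Fin n) (x : Fin n → ℝ) : ℝ :=
  ∑ r : Fin n, (r.val : ℝ) * x (j + r)

/-- `h(x) = min_{1 ≤ j ≤ n} L_j(x)`. -/
noncomputable def hfun {n : ℕ} (x : Fin n → ℝ) : ℝ :=
  sInf (Set.range fun j : Fin n => Lfun j x)

/-- `e_S = Σ_{j ∈ S} e_j`, the indicator vector of a subset `S ⊆ {1,…,n}`. -/
def ind {n : ℕ} (S : Finset (Fin n)) : Fin n → ℝ := fun i => if i ∈ S then 1 else 0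

/-- `ρ_J(x) = h(x − e_J)`. -/
noncomputable def rho {n : ℕ} (J : Finset (Fin n)) (x : Fin n → ℝ) : ℝ :=
  hfun (x - ind J)

lemma Lfun_sub {n : ℕ} (j : Fin n) (x y : Fin n → ℝ) :
    Lfun j (x - y) = Lfun j x - Lfun j y := by
  simp [Lfun, mul_sub, Finset.sum_sub_distrib]

lemma Lfun_eq_sum {n : ℕ} [NeZero n] (j : Fin n) (x : Fin n → ℝ) :
    Lfun j x = ∑ m : Fin n, ((m - j).val : ℝ) * x m := by
  rw [Lfun]
  exact Fintype.sum_equiv (Equiv.addLeft j) _ _ (fun r => by simp)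

open Fin.NatCast Fin.CommRing in
lemma coeff_step {n : ℕ} [NeZero n] (hn : 2 ≤ n) (j m : Fin n) :
    ((m - (j+1)).val : ℝ) = ((m - j).val : ℝ) - 1 + (if m = j then (n:ℝ) else 0) := by
  have h1 : m - (j + 1) = (m - j) - 1 := by ring
  have h1v : (1 : Fin n).val = 1 := by
    have := Fin.val_natCast (n := n) 1
    simpa [Nat.mod_eq_of_lt (show 1 < n by omega)] using this
  set a := m - j with ha
  have hsub : (a - 1).val = (n - 1 + a.val) % n := by
    rw [Fin.sub_def, h1v]
  by_cases h : m = j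
  · have ha0 : a = 0 := by rw [ha, h, sub_self]
    rw [h1, hsub, ha0]
    simp only [Fin.val_zero, Nat.add_zero, Nat.mod_eq_of_lt (show n - 1 < n by omega)]
    rw [if_pos h]
    push_cast [Nat.cast_sub (show 1 ≤ n by omega)]
    ring
  · have ha0 : a ≠ 0 := by
      rw [ha, sub_ne_zero]; exact fun hc => h hc
    have hav : 1 ≤ a.val := by
      rcases Nat.eq_zero_or_pos a.val with h0 | h0
      · exact absurd (Fin.ext h0) ha0
      · exact h0
    have hlt : a.val < n := a.isLt
    rw [h1, hsub]
    have heq : n - 1 + a.val = n + (a.val - 1) := by omega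
    rw [heq, Nat.add_mod_left, Nat.mod_eq_of_lt (by omega)]
    rw [if_neg h]
    push_cast [Nat.cast_sub hav]
    ring

lemma Lfun_step {n : ℕ} [NeZero n] (hn : 2 ≤ n) (j : Fin n) (x : Fin n → ℝ) :
    Lfun (j+1) x = Lfun j x - (∑ m : Fin n, x m) + n * x j := by
  rw [Lfun_eq_sum (j+1) x, Lfun_eq_sum j x]
  have key : ∀ m : Fin n, ((m - (j+1)).val : ℝ) * x m
      = ((m - j).val : ℝ) * x m - x m + (if m = j then (n:ℝ) * x m else 0) := by
    intro m
    rw [coeff_step hn j m]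
    by_cases h : m = j <;> simp [h] <;> ring
  rw [Finset.sum_congr rfl (fun m _ => key m)]
  rw [Finset.sum_add_distrib, Finset.sum_sub_distrib, Finset.sum_ite_eq' univ j]
  simp

open Fin.NatCast Fin.CommRing in
lemma telescope {n : ℕ} [NeZero n] (hn : 2 ≤ n) (x : Fin n → ℝ) (hx : ∑ m : Fin n, x m = 0)
    (j0 : Fin n) : ∀ m : ℕ,
    Lfun (j0 + (m : Fin n)) x = Lfun j0 x + n * ∑ t ∈ Finset.range m, x (j0 + (t : Fin n)) := by
  intro m
  induction m with
  | zero => simp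
  | succ m ih =>
    have hc : ((m + 1 : ℕ) : Fin n) = (m : Fin n) + 1 := by push_cast; ring
    rw [hc, ← add_assoc, Lfun_step hn, ih, Finset.sum_range_succ, hx]
    ring

/-- if `J` is a frozen `k`-subset, i.e. a cyclic interval
`{i, i+1, …, i+k−1} (mod n)`, then the restriction of `ρ_J` to the vertices of
`Δ_{k,n}` is affine: `ρ_J(e_I) = ⟨w, e_I⟩ + c` for all `k`-subsets `I`. -/
theorem stmt5 {n k : ℕ} (hk1 : 1 ≤ k) (hk2 : k ≤ n - 1)
    (J : Finset (Fin n)) (hJcard : J.card = k)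
    (hJfrozen : ∃ i : Fin n, J = univ.filter fun x => (x - i).val < k) :
    ∃ (w : Fin n → ℝ) (c : ℝ), ∀ I : Finset (Fin n), I.card = k →
      rho J (ind I) = (∑ i : Fin n, w i * ind I i) + c := by
  open Fin.NatCast Fin.CommRing in
  obtain ⟨i, hJ⟩ := hJfrozen
  have hn : 2 ≤ n := by have := i.pos; omega
  haveI : NeZero n := ⟨by omega⟩
  have hkn : k < n := by omega
  set j0 : Fin n := i + (k : Fin n) with hj0
  refine ⟨fun m => ((m - j0).val : ℝ), -(Lfun j0 (ind J)), ?_⟩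
  intro I hI
  set x : Fin n → ℝ := ind I - ind J with hx
  have hsumI : ∀ S : Finset (Fin n), ∑ m : Fin n, ind S m = S.card := by
    intro S; simp [ind, Finset.sum_ite_mem]
  have hxsum : ∑ m : Fin n, x m = 0 := by
    simp [hx, Pi.sub_apply, Finset.sum_sub_distrib, hsumI, hI, hJcard]
  -- membership in J along the cyclic walk starting at j0
  have hmem : ∀ t : ℕ, t < n → (j0 + (t : Fin n) ∈ J ↔ n - k ≤ t) := by
    intro t ht
    rw [hJ, Finset.mem_filter]
    simp only [Finset.mem_univ, true_and]
    have heq : (j0 + (t : Fin n)) - i = ((k + t : ℕ) : Fin n) := by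
      rw [hj0]; push_cast; ring
    rw [heq, Fin.val_natCast]
    rcases lt_or_ge (k + t) n with h | h
    · rw [Nat.mod_eq_of_lt h]; omega
    · rw [Nat.mod_eq_sub_mod h, Nat.mod_eq_of_lt (by omega)]; omega
  -- nonnegative partial sums
  have hpart : ∀ m : ℕ, m ≤ n → 0 ≤ ∑ t ∈ Finset.range m, x (j0 + (t : Fin n)) := by
    intro m hm
    have hx' : ∑ t ∈ Finset.range m, x (j0 + (t : Fin n))
        = (((Finset.range m).filter (fun t : ℕ => j0 + (t : Fin n) ∈ I)).card : ℝ)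
          - (((Finset.range m).filter (fun t : ℕ => j0 + (t : Fin n) ∈ J)).card : ℝ) := by
      simp [hx, Pi.sub_apply, ind, Finset.sum_sub_distrib, Finset.sum_boole]
    rw [hx', sub_nonneg, Nat.cast_le]
    -- the J-count
    have hJfil : (Finset.range m).filter (fun t : ℕ => j0 + (t : Fin n) ∈ J)
        = Finset.Ico (n - k) m := by
      ext t
      simp only [Finset.mem_filter, Finset.mem_range, Finset.mem_Ico]
      constructor
      · rintro ⟨h1, h2⟩; exact ⟨(hmem t (by omega)).mp h2, h1⟩
      · rintro ⟨h1, h2⟩; exact ⟨h2, (hmem t (by omega)).mpr h1⟩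
    rw [hJfil, Nat.card_Ico]
    -- the I-count lower bound
    set B := (Finset.range m).filter (fun t : ℕ => ¬ (j0 + (t : Fin n) ∈ I)) with hB
    have hAB : ((Finset.range m).filter (fun t : ℕ => j0 + (t : Fin n) ∈ I)).card + B.card = m := by
      rw [hB, Finset.card_filter_add_card_filter_not, Finset.card_range]
    have hBle : B.card ≤ n - k := by
      have h1 : B.card ≤ (Finset.univ \ I).card := by
        apply Finset.card_le_card_of_injOn (fun t : ℕ => j0 + (t : Fin n))
        · intro t htB
          rw [hB, Finset.mem_coe, Finset.mem_filter] at htB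
          simp [htB.2]
        · intro t1 h1 t2 h2 he
          simp only [hB, Finset.coe_filter, Set.mem_setOf_eq, Finset.mem_range] at h1 h2
          have : ((t1 : Fin n)) = (t2 : Fin n) := by
            exact add_left_cancel he
          have hv := congrArg Fin.val this
          rw [Fin.val_natCast, Fin.val_natCast, Nat.mod_eq_of_lt (by omega),
            Nat.mod_eq_of_lt (by omega)] at hv
          exact hv
      have h2 : (Finset.univ \ I).card = n - k := by
        rw [Finset.card_sdiff_of_subset (Finset.subset_univ I), Finset.card_univ, Fintype.card_fin, hI]
      omega
    omega
  -- the minimum of Lfun is attained at j0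
  have hmin : hfun x = Lfun j0 x := by
    apply le_antisymm
    · exact csInf_le ((Set.finite_range _).bddBelow) ⟨j0, rfl⟩
    · apply le_csInf (Set.range_nonempty _)
      rintro b ⟨j, rfl⟩
      show Lfun j0 x ≤ Lfun j x
      have hj : j = j0 + (((j - j0).val : ℕ) : Fin n) := by
        rw [Fin.cast_val_eq_self]; ring
      rw [hj, telescope hn x hxsum j0 _]
      have h0 := hpart (j - j0).val (le_of_lt (j - j0).isLt)
      nlinarith [show (0:ℝ) ≤ n by positivity]
  -- conclude
  rw [rho, ← hx, hmin, Lfun_sub, Lfun_eq_sum j0 (ind I)]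
  ring
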